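/- Let A be a complex Banach algebra possessing a contractive approximate identity, and let H be a Hilbert A-module. Then H is a generator for the category of Hilbert A-modules if and only if Tr_K(H) = K for every Hilbert A-module K. -/

import Mathlib

noncomputable section

open Filter

open scoped ENNReal

/-- A contractive approximate identity for a (possibly non-unital) normed algebra `A`:
a net `(e i)`, indexed by a nontrivial filter, with `‖e i‖ ≤ 1` for all `i`, such that
`e i * a → a` and `a * e i → a` in norm for every `a ∈ A`. -/
def HasCAI (A : Type) [NonUnitalNormedRing A] : Prop :=
  ∃ (ι : Type) (l : Filter ι) (e : ι → A), l.NeBot ∧ (∀ i, ‖e i‖ ≤ 1) ∧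
    ∀ a : A, Tendsto (fun i => e i * a) l (nhds a) ∧ Tendsto (fun i => a * e i) l (nhds a)

variable (A : Type) [NonUnitalNormedRing A] [NormedSpace ℂ A] [IsScalarTower ℂ A A]
  [SMulCommClass ℂ A A]

/-- A Hilbert `A`-module structure on the Hilbert space `K`: a contractive algebra
homomorphism `π : A → B(K)` which is nondegenerate, i.e. the linear span of
`{π a x : a ∈ A, x ∈ K}` is dense in `K`. -/
def IsHilbertRep {K : Type} [NormedAddCommGroup K] [InnerProductSpace ℂ K] [CompleteSpace K]
    (π : A →ₙₐ[ℂ] (K →L[ℂ] K)) : Prop :=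
  (∀ a : A, ‖π a‖ ≤ ‖a‖) ∧
  Dense ((Submodule.span ℂ {x : K | ∃ (a : A) (y : K), π a y = x} : Submodule ℂ K) : Set K)

/-- A bounded `A`-module map between Hilbert `A`-modules. -/
def IsModuleMap {K L : Type} [NormedAddCommGroup K] [InnerProductSpace ℂ K]
    [NormedAddCommGroup L] [InnerProductSpace ℂ L]
    (πK : A →ₙₐ[ℂ] (K →L[ℂ] K)) (πL : A →ₙₐ[ℂ] (L →L[ℂ] L)) (T : K →L[ℂ] L) : Prop :=
  ∀ (a : A) (x : K), T (πK a x) = πL a (T x)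

/-- `H` is a generator for the category of Hilbert `A`-modules: for all Hilbert
`A`-modules `K`, `L` and every nonzero bounded `A`-module map `R : K → L` there is a
bounded `A`-module map `V : H → K` with `R ∘ V ≠ 0`. -/
def IsGenerator {H : Type} [NormedAddCommGroup H] [InnerProductSpace ℂ H] [CompleteSpace H]
    (πH : A →ₙₐ[ℂ] (H →L[ℂ] H)) : Prop :=
  ∀ (K L : Type) [NormedAddCommGroup K] [InnerProductSpace ℂ K] [CompleteSpace K]
    [NormedAddCommGroup L] [InnerProductSpace ℂ L] [CompleteSpace L],
    ∀ (πK : A →ₙₐ[ℂ] (K →L[ℂ] K)) (πL : A →ₙₐ[ℂ] (L →L[ℂ] L)),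
      IsHilbertRep A πK → IsHilbertRep A πL →
      ∀ R : K →L[ℂ] L, IsModuleMap A πK πL R → R ≠ 0 →
        ∃ V : H →L[ℂ] K, IsModuleMap A πH πK V ∧ R.comp V ≠ 0

/-- The trace `Tr_K(H)`: the closed linear span in `K` of the union of the ranges of all
bounded `A`-module maps `H → K`. -/
def traceSub {H K : Type} [NormedAddCommGroup H] [InnerProductSpace ℂ H] [CompleteSpace H]
    [NormedAddCommGroup K] [InnerProductSpace ℂ K] [CompleteSpace K]
    (πH : A →ₙₐ[ℂ] (H →L[ℂ] H)) (πK : A →ₙₐ[ℂ] (K →L[ℂ] K)) : Submodule ℂ K :=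
  (Submodule.span ℂ
    {y : K | ∃ T : H →L[ℂ] K, IsModuleMap A πH πK T ∧ y ∈ Set.range ⇑T}).topologicalClosure

/-- `H` is a generator for the category of Hilbert `A`-modules if and only if
`Tr_K(H) = K` for every Hilbert `A`-module `K`. -/
theorem generator_iff_trace_eq_top [CompleteSpace A] (hA : HasCAI A)
    (H : Type) [NormedAddCommGroup H] [InnerProductSpace ℂ H] [CompleteSpace H]
    (πH : A →ₙₐ[ℂ] (H →L[ℂ] H)) (hrep : IsHilbertRep A πH) :
    IsGenerator A πH ↔
      ∀ (K : Type) [NormedAddCommGroup K] [InnerProductSpace ℂ K] [CompleteSpace K],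
        ∀ (πK : A →ₙₐ[ℂ] (K →L[ℂ] K)), IsHilbertRep A πK → traceSub A πH πK = ⊤ := by
  constructor
  · -- generator implies trace is everything
    intro hgen K _ _ _ πK hK
    by_contra hne
    set T : Submodule ℂ K := traceSub A πH πK with hTdef
    haveI : CompleteSpace ↥T :=
      (Submodule.isClosed_topologicalClosure _).completeSpace_coe
    -- T is invariant under the action of A
    have hinv : ∀ (a : A) (y : K), y ∈ T → πK a y ∈ T := by
      intro a y hy
      have hle : Submodule.span ℂ
          {y : K | ∃ T' : H →L[ℂ] K, IsModuleMap A πH πK T' ∧ y ∈ Set.range ⇑T'} ≤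
          T.comap (πK a : K →ₗ[ℂ] K) := by
        rw [Submodule.span_le]
        rintro w ⟨V, hV, x, rfl⟩
        simp only [SetLike.mem_coe, Submodule.mem_comap]
        have : πK a (V x) = V (πH a x) := (hV a x).symm
        rw [ContinuousLinearMap.coe_coe, this]
        exact Submodule.le_topologicalClosure _
          (Submodule.subset_span ⟨V, hV, πH a x, rfl⟩)
      have hcl : IsClosed ((T.comap (πK a : K →ₗ[ℂ] K) : Submodule ℂ K) : Set K) :=
        (Submodule.isClosed_topologicalClosure _).preimage (πK a).continuous
      exact Submodule.topologicalClosure_minimal _ hle hcl hy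
    set P : K →L[ℂ] ↥Tᗮ := Tᗮ.orthogonalProjectionOnto with hPdef
    have hPz : ∀ y : K, y ∈ T → P y = 0 := by
      intro y hy
      apply Submodule.orthogonalProjectionOnto_apply_of_mem_orthogonal
      rwa [Submodule.orthogonal_orthogonal]
    have hcomm : ∀ (a : A) (x : K), P (πK a x) = P (πK a (P x)) := by
      intro a x
      have h1 : x - (P x : K) ∈ T := by
        have := Submodule.sub_starProjection_mem_orthogonal (K := Tᗮ) x
        rwa [Submodule.orthogonal_orthogonal] at this
      have h2 : πK a x - πK a (P x : K) ∈ T := by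
        have := hinv a _ h1
        rwa [map_sub] at this
      have h3 := hPz _ h2
      rw [map_sub, sub_eq_zero] at h3
      exact h3
    -- the compressed representation on Tᗮ
    set πL : A →ₙₐ[ℂ] (↥Tᗮ →L[ℂ] ↥Tᗮ) :=
      { toFun := fun a => P ∘L (πK a) ∘L Tᗮ.subtypeL
        map_smul' := by
          intro c a
          ext z
          simp [map_smul]
        map_zero' := by
          ext z
          simp
        map_add' := by
          intro a b
          ext z
          simp [map_add]
        map_mul' := by
          intro a b
          ext z
          simp only [map_mul, ContinuousLinearMap.comp_apply, Submodule.subtypeL_apply,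
            ContinuousLinearMap.mul_apply]
          exact congrArg Subtype.val (hcomm a _) } with hπLdef
    have hπLapp : ∀ (a : A) (z : ↥Tᗮ), πL a z = P (πK a (z : K)) := fun a z => rfl
    have hPnorm : ‖P‖ ≤ 1 := Submodule.orthogonalProjectionOnto_norm_le Tᗮ
    -- πL is a Hilbert representation
    have hLrep : IsHilbertRep A πL := by
      constructor
      · intro a
        apply ContinuousLinearMap.opNorm_le_bound _ (norm_nonneg a)
        intro z
        rw [hπLapp]
        calc ‖P (πK a (z : K))‖ ≤ ‖P‖ * ‖πK a (z : K)‖ := P.le_opNorm _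
          _ ≤ 1 * ‖πK a (z : K)‖ := by
              exact mul_le_mul_of_nonneg_right hPnorm (norm_nonneg _)
          _ = ‖πK a (z : K)‖ := one_mul _
          _ ≤ ‖πK a‖ * ‖(z : K)‖ := (πK a).le_opNorm _
          _ ≤ ‖a‖ * ‖(z : K)‖ := by
              exact mul_le_mul_of_nonneg_right (hK.1 a) (norm_nonneg _)
          _ = ‖a‖ * ‖z‖ := by rw [Submodule.norm_coe]
      · intro z
        have hz : (z : K) ∈ closure
            ((Submodule.span ℂ {x : K | ∃ (a : A) (y : K), πK a y = x} : Submodule ℂ K) :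
              Set K) := hK.2 (z : K)
        have hmaps : Set.MapsTo ⇑P
            ((Submodule.span ℂ {x : K | ∃ (a : A) (y : K), πK a y = x} : Submodule ℂ K) : Set K)
            ((Submodule.span ℂ {x : ↥Tᗮ | ∃ (a : A) (y : ↥Tᗮ), πL a y = x} :
              Submodule ℂ ↥Tᗮ) : Set ↥Tᗮ) := by
          intro w hw
          have hle : Submodule.span ℂ {x : K | ∃ (a : A) (y : K), πK a y = x} ≤
              (Submodule.span ℂ {x : ↥Tᗮ | ∃ (a : A) (y : ↥Tᗮ), πL a y = x}).comap
                (P : K →ₗ[ℂ] ↥Tᗮ) := by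
            rw [Submodule.span_le]
            rintro w ⟨a, y, rfl⟩
            simp only [SetLike.mem_coe, Submodule.mem_comap, ContinuousLinearMap.coe_coe]
            apply Submodule.subset_span
            exact ⟨a, P y, by rw [hπLapp]; exact (hcomm a y).symm⟩
          exact hle hw
        have := map_mem_closure P.continuous hz hmaps
        have hzz : P (z : K) = z := Submodule.orthogonalProjectionOnto_mem_subspace_eq_self z
        rwa [hzz] at this
    -- P is a nonzero module map
    have hPmod : IsModuleMap A πK πL P := by
      intro a x
      rw [hπLapp]
      exact hcomm a x
    have hPne : P ≠ 0 := by
      have hTbot : Tᗮ ≠ ⊥ := by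
        intro h
        exact hne ((Submodule.orthogonal_eq_bot_iff).mp h)
      obtain ⟨z, hz, hz0⟩ := Submodule.ne_bot_iff _ |>.mp hTbot
      intro h0
      apply hz0
      have hzz : ((P z : ↥Tᗮ) : K) = z := Submodule.starProjection_eq_self_iff.mpr hz
      rw [h0] at hzz
      simpa using hzz.symm
    obtain ⟨V, hVmod, hVne⟩ := hgen K ↥Tᗮ πK πL hK hLrep P hPmod hPne
    apply hVne
    ext x
    have hVx : V x ∈ T := Submodule.le_topologicalClosure _
      (Submodule.subset_span ⟨V, hVmod, x, rfl⟩)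
    simp only [ContinuousLinearMap.comp_apply, ContinuousLinearMap.zero_apply]
    rw [hPz _ hVx]
  · -- trace everything implies generator
    intro htr K L _ _ _ _ _ _ πK πL hK hL R hRmod hRne
    by_contra hcon
    push_neg at hcon
    apply hRne
    have hker : traceSub A πH πK ≤ LinearMap.ker (R : K →ₗ[ℂ] L) := by
      apply Submodule.topologicalClosure_minimal
      · rw [Submodule.span_le]
        rintro w ⟨V, hV, x, rfl⟩
        simp only [SetLike.mem_coe, LinearMap.mem_ker]
        have h0 : R.comp V = 0 := hcon V hV
        calc R (V x) = (R.comp V) x := rfl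
          _ = 0 := by rw [h0]; rfl
      · exact ContinuousLinearMap.isClosed_ker R
    have htop : traceSub A πH πK = ⊤ := htr K πK hK
    rw [htop] at hker
    ext x
    have : x ∈ LinearMap.ker (R : K →ₗ[ℂ] L) := hker Submodule.mem_top
    simpa using this
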